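/- arXiv:2507.19182 — 2 statements merged into one kernel-verified Lean document; each statement's English description precedes it below -/
import Mathlib

section
/- With T defined by the recurrence T_1(δ_l) = w(l), T_1(κ) = 0 otherwise, and T_{h+1}(κ) = Σ_{l : κ(l) ≥ 1} T_h(κ − δ_l) · w(l) · ∏_{i ∈ Fin p} r(i)(l)^{(κ−δ_l)(i)}, for every n ≥ 1 the sum of T_n(κ) over all κ : Fin p → ℕ with Σ_i κ(i) = n equals Σ_{c : Fin n → Fin p} W_n(c), the total ordered weight over all cell assignments of the n-element domain. -/
open Finset

/-- The cell configuration of a cell assignment. -/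
def cellConfig {p n : ℕ} (c : Fin n → Fin p) : Fin p → ℕ :=
  fun i => (Finset.univ.filter (fun a => c a = i)).card

/-- The indicator vector `δ_l`. -/
def delta {p : ℕ} (l : Fin p) : Fin p → ℕ := fun i => if i = l then 1 else 0

/-- The ordered weight of a cell assignment. -/
def ordW {R : Type*} [CommRing R] {p n : ℕ} (w : Fin p → R) (r : Fin p → Fin p → R)
    (c : Fin n → Fin p) : R :=
  (∏ a, w (c a)) * ∏ a, ∏ b ∈ Finset.univ.filter (fun b => a < b), r (c a) (c b)

/-- The dynamic-programming table `T` of IncrementalWFOMC. -/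
def T {R : Type*} [CommRing R] {p : ℕ} (w : Fin p → R) (r : Fin p → Fin p → R) :
    ℕ → (Fin p → ℕ) → R
  | 0, _ => 0
  | 1, κ => ∑ l : Fin p, if κ = delta l then w l else 0
  | h + 2, κ =>
      ∑ l ∈ Finset.univ.filter (fun l : Fin p => 1 ≤ κ l),
        T w r (h + 1) (κ - delta l) * w l * ∏ i, r i l ^ ((κ - delta l) i)

lemma config_snoc {p n : ℕ} (c : Fin n → Fin p) (l : Fin p) :
    cellConfig (Fin.snoc c l) = cellConfig c + delta l := by
  funext i
  simp only [cellConfig, delta, Pi.add_apply, Finset.card_filter, Fin.sum_univ_castSucc,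
    Fin.snoc_castSucc, Fin.snoc_last]
  congr 1
  simp [eq_comm]

lemma add_delta_eq {p : ℕ} (l : Fin p) (f κ : Fin p → ℕ) :
    f + delta l = κ ↔ 1 ≤ κ l ∧ f = κ - delta l := by
  constructor
  · rintro rfl
    refine ⟨by simp [delta], ?_⟩
    funext i
    simp only [Pi.sub_apply, Pi.add_apply, delta]
    split <;> omega
  · rintro ⟨h1, rfl⟩
    funext i
    simp only [Pi.sub_apply, Pi.add_apply, delta]
    split
    · next h => subst h; omega
    · omega

lemma prod_pow_config {R : Type*} [CommRing R] {p n : ℕ} (c : Fin n → Fin p) (g : Fin p → R) :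
    ∏ a : Fin n, g (c a) = ∏ i : Fin p, g i ^ cellConfig c i := by
  rw [← Finset.prod_fiberwise_of_maps_to (fun a (_ : a ∈ univ) => Finset.mem_univ (c a))
    (fun a => g (c a))]
  refine Finset.prod_congr rfl fun i _ => ?_
  rw [Finset.prod_congr rfl (fun a ha => by rw [(Finset.mem_filter.mp ha).2]),
    Finset.prod_const]
  rfl

lemma ordW_snoc {R : Type*} [CommRing R] {p n : ℕ} (w : Fin p → R) (r : Fin p → Fin p → R)
    (c : Fin n → Fin p) (l : Fin p) :
    ordW w r (Fin.snoc c l) = ordW w r c * w l * ∏ i, r i l ^ cellConfig c i := by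
  unfold ordW
  rw [← prod_pow_config c (fun i => r i l)]
  simp_rw [Finset.prod_filter]
  rw [Fin.prod_univ_castSucc, Fin.prod_univ_castSucc]
  have hlast : ∀ b : Fin (n+1), ¬ (Fin.last n < b) := fun b => (Fin.le_last b).not_gt
  simp only [Fin.snoc_castSucc, Fin.snoc_last, hlast, if_false, Finset.prod_const_one, mul_one]
  have : ∀ a : Fin n,
      (∏ b : Fin (n+1), if Fin.castSucc a < b
          then r (c a) (Fin.snoc (α := fun _ => Fin p) c l b) else 1)
      = (∏ b : Fin n, if a < b then r (c a) (c b) else 1) * r (c a) l := by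
    intro a
    rw [Fin.prod_univ_castSucc]
    simp [Fin.castSucc_lt_castSucc_iff, Fin.castSucc_lt_last]
  simp_rw [this]
  rw [Finset.prod_mul_distrib]
  ring

lemma key {R : Type*} [CommRing R] {p : ℕ} (w : Fin p → R) (r : Fin p → Fin p → R)
    (n : ℕ) (hn : 1 ≤ n) :
    ∀ κ : Fin p → ℕ,
      T w r n κ = ∑ c : Fin n → Fin p, if cellConfig c = κ then ordW w r c else 0 := by
  induction n, hn using Nat.le_induction with
  | base =>
    intro κ
    show (∑ l : Fin p, if κ = delta l then w l else 0) = _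
    refine (Fintype.sum_equiv (Equiv.funUnique (Fin 1) (Fin p)) _ _ fun c => ?_).symm
    have h1 : cellConfig c = delta (c 0) := by
      funext i
      simp only [cellConfig, delta, Finset.univ_unique, Finset.filter_singleton]
      have hd : (default : Fin 1) = 0 := rfl
      rw [hd]
      split_ifs with h1 h2 h2 <;> simp_all [eq_comm]
    have h2 : ordW w r c = w (c 0) := by
      have hne : ∀ b : Fin 1, ¬ ((0 : Fin 1) < b) := by decide
      simp [ordW, Fin.prod_univ_one, hne, Finset.filter_eq_empty_iff]
    rw [h1, h2]
    have hd : (Equiv.funUnique (Fin 1) (Fin p)) c = c 0 := rfl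
    rw [hd]
    by_cases h : κ = delta (c 0) <;> simp [h, eq_comm]
  | succ n hn IH =>
    intro κ
    obtain ⟨k, rfl⟩ : ∃ k, n = k + 1 := ⟨n - 1, by omega⟩
    have hsum : (∑ c : Fin (k + 2) → Fin p, if cellConfig c = κ then ordW w r c else 0)
        = ∑ l : Fin p, ∑ c : Fin (k + 1) → Fin p,
            if cellConfig (Fin.snoc c l) = κ then ordW w r (Fin.snoc c l) else 0 := by
      have e1 := Fintype.sum_equiv (Fin.snocEquiv (fun _ => Fin p))
        (fun q : Fin p × (Fin (k + 1) → Fin p) =>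
          if cellConfig (Fin.snoc q.2 q.1) = κ then ordW w r (Fin.snoc q.2 q.1) else 0)
        (fun c => if cellConfig c = κ then ordW w r c else 0)
        (fun q => rfl)
      exact e1.symm.trans (Fintype.sum_prod_type _)
    rw [hsum]
    show (∑ l ∈ Finset.univ.filter (fun l : Fin p => 1 ≤ κ l),
        T w r (k + 1) (κ - delta l) * w l * ∏ i, r i l ^ ((κ - delta l) i)) = _
    rw [Finset.sum_filter]
    refine Finset.sum_congr rfl fun l _ => ?_
    simp_rw [config_snoc, ordW_snoc, add_delta_eq]
    by_cases hl : 1 ≤ κ l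
    · simp only [hl, if_true, true_and]
      rw [IH (κ - delta l), Finset.sum_mul, Finset.sum_mul]
      refine Finset.sum_congr rfl fun c _ => ?_
      by_cases hc : cellConfig c = κ - delta l
      · simp [hc]
      · simp [hc]
    · simp [hl]

theorem stmt2 {R : Type*} [CommRing R] {p : ℕ} (hp : 1 ≤ p)
    (w : Fin p → R) (r : Fin p → Fin p → R) (n : ℕ) (hn : 1 ≤ n) :
    ∑ κ ∈ Finset.Nat.antidiagonalTuple p n, T w r n κ =
      ∑ c : Fin n → Fin p, ordW w r c := by
  rw [Finset.sum_congr rfl (fun κ _ => key w r n hn κ), Finset.sum_comm]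
  refine Finset.sum_congr rfl fun c _ => ?_
  have hmem : cellConfig c ∈ Finset.Nat.antidiagonalTuple p n := by
    rw [Finset.Nat.mem_antidiagonalTuple]
    have := Finset.card_eq_sum_card_fiberwise
      (f := c) (t := (univ : Finset (Fin p))) (fun a (_ : a ∈ univ) => Finset.mem_univ (c a))
    simp only [Finset.card_univ, Fintype.card_fin] at this
    exact this.symm
  rw [Finset.sum_ite_eq, if_pos hmem]
end

section
/- Define T : ℕ → (Fin p → ℕ) → Fin p → R by: T_1(δ_l, l) = w(l) for each l ∈ Fin p and T_1(κ, t) = 0 for all other arguments; and for h ≥ 1 and κ with κ(l) ≥ 1, T_{h+1}(κ, l) = Σ_{t : (κ−δ_l)(t) ≥ 1} T_h(κ − δ_l, t) · w(l) · r̃(t)(l) · ∏_{i ∈ Fin p} r(i)(l)^{(κ−δ_l−δ_t)(i)} (and T_{h+1}(κ, l) = 0 when κ(l) = 0). Then for every n ≥ 1, every κ : Fin p → ℕ with Σ_i κ(i) = n, and every t ∈ Fin p: T_n(κ, t) = Σ over all c : Fin n → Fin p with config(c) = κ and c(n−1) = t of W¹_n(c). -/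
open Finset

/-- The predecessor weight `W¹` of a cell assignment. -/
def predW {R : Type*} [CommRing R] {p n : ℕ} (w : Fin p → R)
    (r : Fin p → Fin p → R) (rt : Fin p → Fin p → R) (c : Fin n → Fin p) : R :=
  (∏ a, w (c a)) *
    (∏ a : Fin n, ∏ b ∈ Finset.univ.filter
        (fun b : Fin n => (a : ℕ) < (b : ℕ) ∧ (b : ℕ) ≠ (a : ℕ) + 1),
      r (c a) (c b)) *
    ∏ a : Fin n, ∏ b ∈ Finset.univ.filter (fun b : Fin n => (b : ℕ) = (a : ℕ) + 1),
      rt (c a) (c b)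

/-- The dynamic-programming table for the immediate-predecessor relation:
`T 1 (δ_l) l = w l` (and `0` elsewhere), and
`T (h+1) κ l = ∑_{t : (κ-δ_l) t ≥ 1} T h (κ-δ_l) t * w l * r̃ t l * ∏ i, r i l ^ ((κ-δ_l-δ_t) i)`
when `κ l ≥ 1`, and `0` otherwise. -/
def T1 {R : Type*} [CommRing R] {p : ℕ} (w : Fin p → R) (r : Fin p → Fin p → R)
    (rt : Fin p → Fin p → R) : ℕ → (Fin p → ℕ) → Fin p → R
  | 0, _, _ => 0
  | 1, κ, t => if κ = delta t then w t else 0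
  | h + 2, κ, l =>
      if 1 ≤ κ l then
        ∑ t ∈ Finset.univ.filter (fun t : Fin p => 1 ≤ (κ - delta l) t),
          T1 w r rt (h + 1) (κ - delta l) t * w l * rt t l *
            ∏ i, r i l ^ ((κ - delta l - delta t) i)
      else 0

section Aux
variable {R : Type*} [CommRing R] {p : ℕ} (w : Fin p → R) (r rt : Fin p → Fin p → R)

lemma cellConfig_eq_sum {p n : ℕ} (c : Fin n → Fin p) (i : Fin p) :
    cellConfig c i = ∑ a, if c a = i then 1 else 0 := by
  rw [cellConfig, Finset.card_filter]

lemma cellConfig_snoc {p h : ℕ} (c' : Fin h → Fin p) (l : Fin p) :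
    cellConfig (Fin.snoc c' l) = cellConfig c' + delta l := by
  funext i
  simp only [Pi.add_apply, cellConfig_eq_sum, Fin.sum_univ_castSucc, Fin.snoc_castSucc,
    Fin.snoc_last, delta]
  congr 1
  by_cases hh : l = i <;> simp [hh, eq_comm]

lemma sum_delta {p : ℕ} (l : Fin p) : ∑ i, delta l i = 1 := by
  simp [delta]

lemma cellConfig_pos {p h : ℕ} (c : Fin h → Fin p) (a : Fin h) :
    1 ≤ cellConfig c (c a) := by
  rw [cellConfig]
  exact Finset.card_pos.mpr ⟨a, by simp⟩

lemma card_fiber_erase {p h : ℕ} (c : Fin (h+1) → Fin p) (i : Fin p) :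
    ((Finset.univ.erase (Fin.last h)).filter (fun a => c a = i)).card
      = cellConfig c i - delta (c (Fin.last h)) i := by
  rw [Finset.filter_erase]
  by_cases hi : c (Fin.last h) = i
  · rw [Finset.card_erase_of_mem (by simp [hi])]
    simp [cellConfig, delta, hi.symm]
  · rw [Finset.erase_eq_of_notMem (by simp [hi])]
    have : ¬ i = c (Fin.last h) := fun hh => hi hh.symm
    simp [cellConfig, delta, this]

lemma prod_erase_last {h : ℕ} (c : Fin (h+1) → Fin p) (r : Fin p → Fin p → R) (l : Fin p) :
    ∏ a ∈ Finset.univ.erase (Fin.last h), r (c a) l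
      = ∏ i, r i l ^ ((cellConfig c - delta (c (Fin.last h))) i) := by
  rw [← Finset.prod_fiberwise_of_maps_to (g := c) (t := Finset.univ) (fun x _ => Finset.mem_univ _)]
  refine Finset.prod_congr rfl fun i _ => ?_
  rw [Finset.prod_congr rfl (fun a ha => by rw [(Finset.mem_filter.mp ha).2]),
    Finset.prod_const, card_fiber_erase]
  rfl

lemma predW_snoc {h : ℕ} (c' : Fin (h+1) → Fin p) (l : Fin p) :
    predW w r rt (Fin.snoc c' l) =
      predW w r rt c' * w l * rt (c' (Fin.last h)) l *
        ∏ a ∈ Finset.univ.erase (Fin.last h), r (c' a) l := by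
  unfold predW
  simp only [Finset.prod_filter]
  have hw : (∏ a : Fin (h+1+1), w ((Fin.snoc c' l : Fin (h+1+1) → Fin p) a))
      = (∏ a : Fin (h+1), w ((Fin.snoc c' l : Fin (h+1+1) → Fin p) a.castSucc)) * w ((Fin.snoc c' l : Fin (h+1+1) → Fin p) (Fin.last (h+1))) :=
    Fin.prod_univ_castSucc _
  have hr : (∏ a : Fin (h+1+1), ∏ b : Fin (h+1+1),
        if (a:ℕ) < (b:ℕ) ∧ (b:ℕ) ≠ (a:ℕ)+1 then r ((Fin.snoc c' l : Fin (h+1+1) → Fin p) a) ((Fin.snoc c' l : Fin (h+1+1) → Fin p) b) else 1)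
      = (∏ a : Fin (h+1), ∏ b : Fin (h+1+1),
        if ((a.castSucc:ℕ) < (b:ℕ) ∧ (b:ℕ) ≠ (a.castSucc:ℕ)+1) then
          r ((Fin.snoc c' l : Fin (h+1+1) → Fin p) a.castSucc) ((Fin.snoc c' l : Fin (h+1+1) → Fin p) b) else 1)
        * ∏ b : Fin (h+1+1),
        if ((Fin.last (h+1):ℕ) < (b:ℕ) ∧ (b:ℕ) ≠ (Fin.last (h+1):ℕ)+1) then
          r ((Fin.snoc c' l : Fin (h+1+1) → Fin p) (Fin.last (h+1))) ((Fin.snoc c' l : Fin (h+1+1) → Fin p) b) else 1 :=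
    Fin.prod_univ_castSucc _
  have hrt : (∏ a : Fin (h+1+1), ∏ b : Fin (h+1+1),
        if (b:ℕ) = (a:ℕ)+1 then rt ((Fin.snoc c' l : Fin (h+1+1) → Fin p) a) ((Fin.snoc c' l : Fin (h+1+1) → Fin p) b) else 1)
      = (∏ a : Fin (h+1), ∏ b : Fin (h+1+1),
        if ((b:ℕ) = (a.castSucc:ℕ)+1) then rt ((Fin.snoc c' l : Fin (h+1+1) → Fin p) a.castSucc) ((Fin.snoc c' l : Fin (h+1+1) → Fin p) b) else 1)
        * ∏ b : Fin (h+1+1),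
        if ((b:ℕ) = (Fin.last (h+1):ℕ)+1) then rt ((Fin.snoc c' l : Fin (h+1+1) → Fin p) (Fin.last (h+1))) ((Fin.snoc c' l : Fin (h+1+1) → Fin p) b) else 1 :=
    Fin.prod_univ_castSucc _
  rw [hw, hr, hrt]
  simp only [Fin.snoc_castSucc, Fin.snoc_last, Fin.coe_castSucc, Fin.val_last]
  have e1 : ∀ a : Fin (h+1), (∏ b : Fin (h+2),
      if ((a:ℕ) < (b:ℕ) ∧ (b:ℕ) ≠ (a:ℕ)+1) then r (c' a) ((Fin.snoc c' l : Fin (h+1+1) → Fin p) b) else 1)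
      = (∏ b : Fin (h+1), if ((a:ℕ) < (b:ℕ) ∧ (b:ℕ) ≠ (a:ℕ)+1) then r (c' a) (c' b) else 1)
        * (if a ≠ Fin.last h then r (c' a) l else 1) := by
    intro a
    rw [Fin.prod_univ_castSucc (n := h+1)]
    simp only [Fin.snoc_castSucc, Fin.snoc_last, Fin.coe_castSucc, Fin.val_last]
    congr 1
    have ha : (a:ℕ) < h + 1 := a.isLt
    by_cases hA : a = Fin.last h
    · simp [hA]
    · have : (a:ℕ) ≠ h := fun hh => hA (Fin.ext hh)
      simp [ha, hA]
      omega
  have e2 : ∀ a : Fin (h+1), (∏ b : Fin (h+2),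
      if ((b:ℕ) = (a:ℕ)+1) then rt (c' a) ((Fin.snoc c' l : Fin (h+1+1) → Fin p) b) else 1)
      = (∏ b : Fin (h+1), if ((b:ℕ) = (a:ℕ)+1) then rt (c' a) (c' b) else 1)
        * (if a = Fin.last h then rt (c' a) l else 1) := by
    intro a
    rw [Fin.prod_univ_castSucc (n := h+1)]
    simp only [Fin.snoc_castSucc, Fin.snoc_last, Fin.coe_castSucc, Fin.val_last]
    congr 1
    by_cases hA : a = Fin.last h
    · simp [hA]
    · have : (a:ℕ) ≠ h := fun hh => hA (Fin.ext hh)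
      simp [hA]
      omega
  rw [Finset.prod_congr rfl (fun a _ => e1 a), Finset.prod_congr rfl (fun a _ => e2 a)]
  rw [Finset.prod_mul_distrib, Finset.prod_mul_distrib]
  have e3 : (∏ b : Fin (h+2), if ((h+1:ℕ) < (b:ℕ) ∧ (b:ℕ) ≠ (h+1:ℕ)+1) then
      r l ((Fin.snoc c' l : Fin (h+1+1) → Fin p) b) else 1) = 1 := by
    apply Finset.prod_eq_one
    intro b _
    have : ¬ ((h+1:ℕ) < (b:ℕ)) := by omega
    simp [this]
  have e4 : (∏ b : Fin (h+2), if ((b:ℕ) = (h+1:ℕ)+1) then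
      rt l ((Fin.snoc c' l : Fin (h+1+1) → Fin p) b) else 1) = 1 := by
    apply Finset.prod_eq_one
    intro b _
    have : (b:ℕ) ≠ h + 2 := by omega
    simp [this]
  rw [e3, e4]
  have e5 : (∏ a : Fin (h+1), if a ≠ Fin.last h then r (c' a) l else 1)
      = ∏ a ∈ Finset.univ.erase (Fin.last h), r (c' a) l := by
    rw [← Finset.prod_filter, Finset.filter_ne']
  have e6 : (∏ a : Fin (h+1), if a = Fin.last h then rt (c' a) l else 1)
      = rt (c' (Fin.last h)) l := by
    rw [Finset.prod_ite_eq' Finset.univ (Fin.last h) (fun a => rt (c' a) l)]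
    simp
  rw [e5, e6]
  ring

lemma eq_sub_delta {p : ℕ} {x κ : Fin p → ℕ} {l : Fin p} (hx : x + delta l = κ) :
    x = κ - delta l := by
  funext i
  have := congrFun hx i
  simp only [Pi.add_apply, Pi.sub_apply] at this ⊢
  omega

lemma aux_main (m : ℕ) : ∀ (κ : Fin p → ℕ), (∑ i, κ i = m + 1) → ∀ t : Fin p,
    T1 w r rt (m+1) κ t =
      ∑ c ∈ Finset.univ.filter
          (fun c : Fin (m+1) → Fin p => cellConfig c = κ ∧ c (Fin.last m) = t),
        predW w r rt c := by
  induction m with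
  | zero =>
    intro κ hκ t
    have hc1 : ∀ c : Fin 1 → Fin p, cellConfig c = delta (c 0) := by
      intro c
      funext i
      rw [cellConfig_eq_sum, Fin.sum_univ_one, delta]
      rcases eq_or_ne (c 0) i with hh | hh
      · simp [hh]
      · rw [if_neg hh, if_neg (fun h => hh h.symm)]
    by_cases hk : κ = delta t
    · have hset : Finset.univ.filter
          (fun c : Fin 1 → Fin p => cellConfig c = κ ∧ c (Fin.last 0) = t)
          = {fun _ : Fin 1 => t} := by
        ext c
        simp only [Finset.mem_filter, Finset.mem_univ, true_and, Finset.mem_singleton]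
        constructor
        · rintro ⟨-, h2⟩
          funext a
          have : a = Fin.last 0 := Subsingleton.elim _ _
          rw [this, h2]
        · rintro rfl
          exact ⟨by rw [hc1, hk], rfl⟩
      rw [hset, Finset.sum_singleton]
      have hT : T1 w r rt 1 κ t = w t := by
        rw [T1]
        exact if_pos hk
      rw [hT, predW]
      have h1 : (∏ a : Fin 1, w ((fun _ : Fin 1 => t) a)) = w t := by simp
      have h2 : ∀ a : Fin 1, (Finset.univ.filter
          (fun b : Fin 1 => (a : ℕ) < (b : ℕ) ∧ (b : ℕ) ≠ (a : ℕ) + 1)) = ∅ := by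
        intro a
        ext b
        simp [Fin.val_eq_zero]
      have h3 : ∀ a : Fin 1, (Finset.univ.filter
          (fun b : Fin 1 => (b : ℕ) = (a : ℕ) + 1)) = ∅ := by
        intro a
        ext b
        simp [Fin.val_eq_zero]
      simp [h1, h2, h3]
    · have hset : Finset.univ.filter
          (fun c : Fin 1 → Fin p => cellConfig c = κ ∧ c (Fin.last 0) = t) = ∅ := by
        rw [Finset.filter_false_of_mem]
        rintro c - ⟨h1, h2⟩
        apply hk
        rw [← h1, hc1 c]
        have : (0 : Fin 1) = Fin.last 0 := rfl
        rw [this, h2]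
      rw [hset, Finset.sum_empty]
      have hT : T1 w r rt 1 κ t = 0 := by
        rw [T1]
        exact if_neg hk
      rw [hT]
  | succ g ih =>
    intro κ hκ l
    by_cases hl : 1 ≤ κ l
    · have hsub : ∀ i, (κ - delta l) i + delta l i = κ i := by
        intro i
        by_cases hil : i = l
        · rw [hil]
          have hd : delta l l = 1 := by simp [delta]
          simp only [Pi.sub_apply, hd]
          omega
        · simp [delta, hil]
      have hsum1 : ∑ i, (κ - delta l) i = g + 1 := by
        have h1 : ∑ i, ((κ - delta l) i + delta l i) = ∑ i, κ i :=
          Finset.sum_congr rfl fun i _ => hsub i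
        rw [Finset.sum_add_distrib, sum_delta, hκ] at h1
        omega
      -- Step A: peel off the last cell
      have stepA : ∑ c ∈ Finset.univ.filter
            (fun c : Fin (g+1+1) → Fin p => cellConfig c = κ ∧ c (Fin.last (g+1)) = l),
            predW w r rt c
          = ∑ c' ∈ Finset.univ.filter
            (fun c' : Fin (g+1) → Fin p => cellConfig c' = κ - delta l),
            predW w r rt (Fin.snoc c' l) := by
        refine Finset.sum_bij' (fun c _ => Fin.init c) (fun c' _ => Fin.snoc c' l)
          ?_ ?_ ?_ ?_ ?_
        · intro c hc
          obtain ⟨h1, h2⟩ := (Finset.mem_filter.mp hc).2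
          simp only [Finset.mem_filter, Finset.mem_univ, true_and]
          apply eq_sub_delta
          rw [← cellConfig_snoc]
          have : Fin.snoc (Fin.init c) l = c := by
            rw [← h2]; exact Fin.snoc_init_self c
          rw [this, h1]
        · intro c' hc'
          have h1 := (Finset.mem_filter.mp hc').2
          simp only [Finset.mem_filter, Finset.mem_univ, true_and]
          constructor
          · rw [cellConfig_snoc, h1]
            funext i
            exact hsub i
          · exact Fin.snoc_last _ _
        · intro c hc
          obtain ⟨h1, h2⟩ := (Finset.mem_filter.mp hc).2
          show Fin.snoc (Fin.init c) l = c
          rw [← h2]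
          exact Fin.snoc_init_self c
        · intro c' _
          exact Fin.init_snoc _ _
        · intro c hc
          obtain ⟨h1, h2⟩ := (Finset.mem_filter.mp hc).2
          rw [show Fin.snoc (Fin.init c) l = c from by rw [← h2]; exact Fin.snoc_init_self c]
      rw [stepA]
      -- Step B: fiber over the value of the last cell of c'
      rw [← Finset.sum_fiberwise_of_maps_to
        (g := fun c' : Fin (g+1) → Fin p => c' (Fin.last g))
        (t := Finset.univ.filter (fun t' : Fin p => 1 ≤ (κ - delta l) t'))
        (fun c' hc' => by
          have h1 := (Finset.mem_filter.mp hc').2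
          simp only [Finset.mem_filter, Finset.mem_univ, true_and]
          rw [← h1]
          exact cellConfig_pos c' (Fin.last g))]
      have hT : T1 w r rt (g+1+1) κ l =
          ∑ t ∈ Finset.univ.filter (fun t : Fin p => 1 ≤ (κ - delta l) t),
            T1 w r rt (g + 1) (κ - delta l) t * w l * rt t l *
              ∏ i, r i l ^ ((κ - delta l - delta t) i) := by
        rw [T1]
        exact if_pos hl
      rw [hT]
      refine Finset.sum_congr rfl fun t' ht' => ?_
      rw [ih (κ - delta l) hsum1 t', Finset.sum_mul, Finset.sum_mul, Finset.sum_mul,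
        Finset.filter_filter]
      refine Finset.sum_congr rfl fun c' hc' => ?_
      obtain ⟨h1, h2⟩ := (Finset.mem_filter.mp hc').2
      rw [predW_snoc, prod_erase_last, h1, h2]
    · have hset : Finset.univ.filter
          (fun c : Fin (g+1+1) → Fin p => cellConfig c = κ ∧ c (Fin.last (g+1)) = l) = ∅ := by
        rw [Finset.filter_false_of_mem]
        rintro c - ⟨h1, h2⟩
        apply hl
        rw [← h1, ← h2]
        exact cellConfig_pos c (Fin.last (g+1))
      rw [hset, Finset.sum_empty]
      have hT : T1 w r rt (g+1+1) κ l = 0 := by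
        rw [T1]
        exact if_neg hl
      rw [hT]

end Aux

theorem stmt8 {R : Type*} [CommRing R] {p : ℕ} (hp : 1 ≤ p)
    (w : Fin p → R) (r : Fin p → Fin p → R) (rt : Fin p → Fin p → R)
    (n : ℕ) (hn : 1 ≤ n) (κ : Fin p → ℕ) (hκ : ∑ i, κ i = n) (t : Fin p) :
    T1 w r rt n κ t =
      ∑ c ∈ Finset.univ.filter
          (fun c : Fin n → Fin p => cellConfig c = κ ∧ c ⟨n - 1, by omega⟩ = t),
        predW w r rt c := by
  obtain ⟨m, rfl⟩ : ∃ m, n = m + 1 := ⟨n - 1, by omega⟩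
  exact aux_main w r rt m κ hκ t
end
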